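/- Cumulative KL lower bound: let P_0, ..., P_M be probability distributions on a finite set (M ≥ 1, each P_{t+1} positive wherever P_t is positive), and suppose TV(P_M, P_0) ≥ Δ for some Δ ≥ 0. Then (1/M)·Σ_{t=0}^{M-1} KL(P_t‖P_{t+1}) ≥ 2·Δ²/M². -/

import Mathlib

open Real

noncomputable def klφ (t : ℝ) : ℝ := t * Real.log t - t + 1 - 3*(t-1)^2/(2*(t+2))
noncomputable def klg (t : ℝ) : ℝ := Real.log t - 3*(t-1)*(t+5)/(2*(t+2)^2)

lemma hasDerivAt_klg (t : ℝ) (ht : 0 < t) :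
    HasDerivAt klg ((t-1)^2*(t+8)/(t*(t+2)^3)) t := by
  have h2 : (0:ℝ) < t + 2 := by linarith
  have hnum : HasDerivAt (fun y:ℝ => 3*(y-1)*(y+5)) (3*(1*(t+5)+(t-1)*1)) t := by
    have := (((hasDerivAt_id t).sub_const 1).mul ((hasDerivAt_id t).add_const 5)).const_mul 3
    simpa [mul_assoc] using this
  have hden : HasDerivAt (fun y:ℝ => 2*(y+2)^2) (2*(2*(t+2)*1)) t := by
    have := (((hasDerivAt_id t).add_const 2).pow 2).const_mul 2
    simpa using this
  have hd := hnum.div hden (by positivity)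
  have := (Real.hasDerivAt_log (ne_of_gt ht)).sub hd
  refine this.congr_deriv ?_
  field_simp
  ring

lemma hasDerivAt_klφ (t : ℝ) (ht : 0 < t) : HasDerivAt klφ (klg t) t := by
  have h2 : (0:ℝ) < t + 2 := by linarith
  have hnum : HasDerivAt (fun y:ℝ => 3*(y-1)^2) (3*(2*(t-1)*1)) t := by
    have := (((hasDerivAt_id t).sub_const 1).pow 2).const_mul 3
    simpa using this
  have hden : HasDerivAt (fun y:ℝ => 2*(y+2)) (2*1) t := by
    have := ((hasDerivAt_id t).add_const 2).const_mul 2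
    simpa using this
  have hd := hnum.div hden (by positivity)
  have := (((Real.hasDerivAt_mul_log (ne_of_gt ht)).sub (hasDerivAt_id t)).add_const 1).sub hd
  refine this.congr_deriv ?_
  unfold klg
  field_simp
  ring
lemma klg_mono : MonotoneOn klg (Set.Ioi (0:ℝ)) := by
  have hi : interior (Set.Ioi (0:ℝ)) = Set.Ioi 0 := interior_Ioi
  apply monotoneOn_of_deriv_nonneg (convex_Ioi 0)
  · intro x hx; exact (hasDerivAt_klg x hx).continuousAt.continuousWithinAt
  · rw [hi]; intro x hx; exact (hasDerivAt_klg x hx).differentiableAt.differentiableWithinAt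
  · rw [hi]; intro x hx
    rw [(hasDerivAt_klg x hx).deriv]
    have : (0:ℝ) < x := hx
    positivity

lemma klg_one : klg 1 = 0 := by simp [klg]

lemma klφ_nonneg (t : ℝ) (ht : 0 < t) : 0 ≤ klφ t := by
  have hone : klφ 1 = 0 := by norm_num [klφ]
  rcases le_or_gt 1 t with h | h
  · have : MonotoneOn klφ (Set.Ici 1) := by
      apply monotoneOn_of_deriv_nonneg (convex_Ici 1)
      · intro x hx
        exact (hasDerivAt_klφ x (by simp at hx; linarith)).continuousAt.continuousWithinAt
      · rw [interior_Ici]; intro x hx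
        exact (hasDerivAt_klφ x (by simp at hx; linarith)).differentiableAt.differentiableWithinAt
      · rw [interior_Ici]; intro x hx
        have hx1 : (1:ℝ) < x := hx
        rw [(hasDerivAt_klφ x (by linarith)).deriv]
        have := klg_mono (Set.mem_Ioi.2 one_pos) (Set.mem_Ioi.2 (by linarith : (0:ℝ) < x)) hx1.le
        rw [klg_one] at this; exact this
    have := this (Set.mem_Ici.2 le_rfl) (Set.mem_Ici.2 h) h
    rw [hone] at this; exact this
  · have : AntitoneOn klφ (Set.Ioc 0 1) := by
      apply antitoneOn_of_deriv_nonpos (convex_Ioc 0 1)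
      · intro x hx; exact (hasDerivAt_klφ x hx.1).continuousAt.continuousWithinAt
      · rw [interior_Ioc]; intro x hx
        exact (hasDerivAt_klφ x hx.1).differentiableAt.differentiableWithinAt
      · rw [interior_Ioc]; intro x hx
        rw [(hasDerivAt_klφ x hx.1).deriv]
        have := klg_mono (Set.mem_Ioi.2 hx.1) (Set.mem_Ioi.2 one_pos) hx.2.le
        rw [klg_one] at this; exact this
    have := this (Set.mem_Ioc.2 ⟨ht, h.le⟩) (Set.mem_Ioc.2 ⟨one_pos, le_rfl⟩) h.le
    rw [hone] at this; exact this

lemma kl_key (t : ℝ) (ht : 0 < t) :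
    3*(t-1)^2/(2*(t+2)) ≤ t * Real.log t - t + 1 := by
  have := klφ_nonneg t ht
  unfold klφ at this; linarith

lemma kl_pointwise (p q : ℝ) (hp : 0 ≤ p) (hq : 0 ≤ q) (h : 0 < p → 0 < q) :
    3*(p-q)^2/(2*(p+2*q)) ≤ p * Real.log (p/q) - p + q := by
  rcases eq_or_lt_of_le hp with hp0 | hp0
  · rcases eq_or_lt_of_le hq with hq0 | hq0
    · simp [← hp0, ← hq0]
    · rw [← hp0]
      have : 3*(0-q)^2/(2*(0+2*q)) = 3*q/4 := by field_simp; ring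
      rw [this]; simp; linarith
  · have hq0 := h hp0
    have key := kl_key (p/q) (div_pos hp0 hq0)
    have h1 : q * (p/q * Real.log (p/q) - p/q + 1) = p * Real.log (p/q) - p + q := by
      field_simp
    have h2 : q * (3*(p/q-1)^2/(2*(p/q+2))) = 3*(p-q)^2/(2*(p+2*q)) := by
      have h3 : (0:ℝ) < p + 2*q := by linarith
      field_simp
    rw [← h1, ← h2]
    exact mul_le_mul_of_nonneg_left key hq0.le
lemma pinsker {X : Type*} [Fintype X] (P Q : X → ℝ)
    (hP : ∀ x, 0 ≤ P x) (hQ : ∀ x, 0 ≤ Q x)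
    (hPs : ∑ x, P x = 1) (hQs : ∑ x, Q x = 1)
    (habs : ∀ x, 0 < P x → 0 < Q x) :
    ((1/2) * ∑ x, |P x - Q x|)^2 ≤ (1/2) * ∑ x, P x * Real.log (P x / Q x) := by
  set w : X → ℝ := fun x => (P x + 2*Q x)/3 with hw
  have hwnn : ∀ x, 0 ≤ w x := fun x => by
    have := hP x; have := hQ x; positivity
  have hws : ∑ x, w x = 1 := by
    rw [hw]; simp only; rw [← Finset.sum_div, Finset.sum_add_distrib, hPs, ← Finset.mul_sum, hQs]
    norm_num
  -- Cauchy-Schwarz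
  have cs := Finset.sum_mul_sq_le_sq_mul_sq Finset.univ
      (fun x => |P x - Q x| / Real.sqrt (w x)) (fun x => Real.sqrt (w x))
  have h1 : ∀ x : X, |P x - Q x| / Real.sqrt (w x) * Real.sqrt (w x) = |P x - Q x| := by
    intro x
    rcases eq_or_lt_of_le (hwnn x) with h0 | h0
    · have hp0 : P x = 0 := by
        have := hP x; have := hQ x
        by_contra hne
        have : 0 < P x := lt_of_le_of_ne (hP x) (Ne.symm hne)
        have := habs x this
        have : 0 < w x := by rw [hw]; simp only; positivity
        linarith [h0 ▸ this]
      have hq0 : Q x = 0 := by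
        have := hQ x
        by_contra hne
        have : 0 < Q x := lt_of_le_of_ne (hQ x) (Ne.symm hne)
        have : 0 < w x := by rw [hw]; simp only; have := hP x; positivity
        linarith [h0 ▸ this]
      simp [hp0, hq0]
    · exact div_mul_cancel₀ _ (ne_of_gt (Real.sqrt_pos.2 h0))
  have h2 : ∀ x : X, (|P x - Q x| / Real.sqrt (w x))^2 = (P x - Q x)^2 / w x := by
    intro x
    rw [div_pow, sq_abs, Real.sq_sqrt (hwnn x)]
  have h3 : ∀ x : X, (Real.sqrt (w x))^2 = w x := fun x => Real.sq_sqrt (hwnn x)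
  simp only [h1, h2, h3] at cs
  rw [hws, mul_one] at cs
  -- pointwise bound
  have h4 : ∀ x : X, (P x - Q x)^2 / w x ≤ 2 * (P x * Real.log (P x / Q x) - P x + Q x) := by
    intro x
    have key := kl_pointwise (P x) (Q x) (hP x) (hQ x) (habs x)
    have : (P x - Q x)^2 / w x = 2 * (3*(P x - Q x)^2/(2*(P x + 2*Q x))) := by
      rw [hw]; simp only
      rcases eq_or_ne (P x + 2*Q x) 0 with h0 | h0
      · rw [h0]; simp
      · field_simp
    rw [this]; linarith
  have h5 : ∑ x, (P x - Q x)^2 / w x ≤ 2 * ∑ x, P x * Real.log (P x / Q x) := by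
    calc ∑ x, (P x - Q x)^2 / w x
        ≤ ∑ x, 2 * (P x * Real.log (P x / Q x) - P x + Q x) :=
          Finset.sum_le_sum (fun x _ => h4 x)
      _ = 2 * ∑ x, P x * Real.log (P x / Q x) := by
          rw [← Finset.mul_sum]
          congr 1
          rw [Finset.sum_add_distrib, Finset.sum_sub_distrib, hPs, hQs]
          ring
  have h6 : (∑ x, |P x - Q x|)^2 ≤ 2 * ∑ x, P x * Real.log (P x / Q x) :=
    le_trans cs h5
  nlinarith [h6]
/-- Cumulative KL lower bound: if `TV(P_M, P_0) ≥ Δ ≥ 0`, `M ≥ 1`, and each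
`P_{t+1}` is positive wherever `P_t` is, then
`(1/M) · Σ_{t<M} KL(P_t‖P_{t+1}) ≥ 2·Δ²/M²`. -/
theorem cumulative_kl_lower_bound {X : Type*} [Fintype X] (M : ℕ) (hM : 1 ≤ M)
    (P : ℕ → X → ℝ)
    (hP : ∀ t ≤ M, ∀ x, 0 ≤ P t x) (hPsum : ∀ t ≤ M, ∑ x, P t x = 1)
    (habs : ∀ t < M, ∀ x, 0 < P t x → 0 < P (t + 1) x)
    (Δ : ℝ) (hΔ : 0 ≤ Δ)
    (hTV : Δ ≤ (1 / 2) * ∑ x, |P M x - P 0 x|) :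
    2 * Δ ^ 2 / (M : ℝ) ^ 2 ≤
      (1 / (M : ℝ)) * ∑ t ∈ Finset.range M,
        ∑ x, P t x * Real.log (P t x / P (t + 1) x) := by
  set d : ℕ → ℝ := fun t => (1/2) * ∑ x, |P t x - P (t+1) x| with hd
  set KL : ℕ → ℝ := fun t => ∑ x, P t x * Real.log (P t x / P (t+1) x) with hKL
  have hdnn : ∀ t, 0 ≤ d t := fun t => by
    apply mul_nonneg (by norm_num)
    exact Finset.sum_nonneg fun x _ => abs_nonneg _
  -- Pinsker per step
  have hpin : ∀ t < M, d t ^ 2 ≤ (1/2) * KL t := by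
    intro t ht
    exact pinsker (P t) (P (t+1)) (hP t (le_of_lt ht)) (hP (t+1) ht)
      (hPsum t (le_of_lt ht)) (hPsum (t+1) ht) (habs t ht)
  -- triangle inequality
  have htri : Δ ≤ ∑ t ∈ Finset.range M, d t := by
    have step : ∀ x : X, |P M x - P 0 x| ≤ ∑ t ∈ Finset.range M, |P t x - P (t+1) x| := by
      intro x
      have := Finset.sum_range_sub (fun t => P t x) M
      calc |P M x - P 0 x| = |∑ t ∈ Finset.range M, (P (t+1) x - P t x)| := by rw [this]
        _ ≤ ∑ t ∈ Finset.range M, |P (t+1) x - P t x| := Finset.abs_sum_le_sum_abs _ _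
        _ = ∑ t ∈ Finset.range M, |P t x - P (t+1) x| := by
            apply Finset.sum_congr rfl; intro t _; rw [abs_sub_comm]
    calc Δ ≤ (1/2) * ∑ x, |P M x - P 0 x| := hTV
      _ ≤ (1/2) * ∑ x, ∑ t ∈ Finset.range M, |P t x - P (t+1) x| := by
          apply mul_le_mul_of_nonneg_left _ (by norm_num)
          exact Finset.sum_le_sum fun x _ => step x
      _ = ∑ t ∈ Finset.range M, d t := by
          rw [Finset.sum_comm, Finset.mul_sum]
  -- Cauchy-Schwarz over t
  have hcs : (∑ t ∈ Finset.range M, d t)^2 ≤ (M:ℝ) * ∑ t ∈ Finset.range M, d t ^ 2 := by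
    have := Finset.sum_mul_sq_le_sq_mul_sq (Finset.range M) d (fun _ => (1:ℝ))
    simp only [mul_one, one_pow, Finset.sum_const, Finset.card_range, nsmul_eq_mul] at this
    linarith [this]
  have hKLsum : ∑ t ∈ Finset.range M, d t ^ 2 ≤ (1/2) * ∑ t ∈ Finset.range M, KL t := by
    rw [Finset.mul_sum]
    exact Finset.sum_le_sum fun t ht => hpin t (Finset.mem_range.1 ht)
  have hM0 : (0:ℝ) < M := by exact_mod_cast hM
  have hΔ2 : Δ^2 ≤ (∑ t ∈ Finset.range M, d t)^2 :=
    pow_le_pow_left₀ hΔ htri 2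
  have h2 : 2 * Δ^2 ≤ (M:ℝ) * ∑ t ∈ Finset.range M, KL t := by nlinarith
  have h3 : (1/(M:ℝ) * ∑ t ∈ Finset.range M, KL t) * (M:ℝ)^2
      = (M:ℝ) * ∑ t ∈ Finset.range M, KL t := by field_simp
  rw [div_le_iff₀ (by positivity : (0:ℝ) < (M:ℝ)^2), h3]
  exact h2
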